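/- For α > 0, β > 0, λ ∈ ℝ and s > |λ|^{1/α}, the Laplace transform of t^{β-1} E_{α,β}(λ t^α) equals s^{α-β}/(s^α − λ). -/

import Mathlib

open MeasureTheory Real

/-- Two-parameter Mittag-Leffler function E_{α,β}(z) = Σ_{k=0}^∞ z^k / Γ(αk + β). -/
noncomputable def mittagLeffler (α β z : ℝ) : ℝ :=
  ∑' k : ℕ, z ^ k / Real.Gamma (α * k + β)

lemma key_integrable (s γ : ℝ) (hs : 0 < s) (hγ : 0 < γ) :
    IntegrableOn (fun t : ℝ => t ^ (γ - 1) * Real.exp (-(s * t))) (Set.Ioi 0) := by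
  have h := integrableOn_rpow_mul_exp_neg_mul_rpow (s := γ - 1) (p := 1) (b := s)
    (by linarith) zero_lt_one hs
  refine h.congr_fun (fun x hx => ?_) measurableSet_Ioi
  dsimp only
  rw [Real.rpow_one, neg_mul]

lemma key_int (s γ : ℝ) (hs : 0 < s) (hγ : 0 < γ) :
    ∫ t in Set.Ioi (0:ℝ), t ^ (γ - 1) * Real.exp (-(s * t)) = (1 / s) ^ γ * Real.Gamma γ :=
  Real.integral_rpow_mul_exp_neg_mul_Ioi hγ hs

theorem laplace_of_mittag_leffler (α β lam : ℝ) (hα : 0 < α) (hβ : 0 < β) :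
    ∀ s : ℝ, |lam| ^ (1 / α) < s →
      (∫ t in Set.Ioi (0:ℝ),
          Real.exp (-s * t) * (t ^ (β - 1) * mittagLeffler α β (lam * t ^ α))) =
        s ^ (α - β) / (s ^ α - lam) := by
  intro s hlt
  have hs : 0 < s := lt_of_le_of_lt (Real.rpow_nonneg (abs_nonneg lam) _) hlt
  have hlam : |lam| < s ^ α := by
    have := Real.rpow_lt_rpow (Real.rpow_nonneg (abs_nonneg lam) _) hlt hα
    rwa [← Real.rpow_mul (abs_nonneg lam), one_div, inv_mul_cancel₀ hα.ne',
      Real.rpow_one] at this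
  set F : ℕ → ℝ → ℝ := fun k t =>
    (lam ^ k / Real.Gamma (α * k + β)) * (t ^ (α * k + β - 1) * Real.exp (-(s * t))) with hF
  have hγ : ∀ k : ℕ, (0:ℝ) < α * k + β := fun k => by positivity
  have hint : ∀ k : ℕ, IntegrableOn (F k) (Set.Ioi 0) := fun k =>
    (key_integrable s _ hs (hγ k)).const_mul _
  have hpow : ∀ k : ℕ, (1/s) ^ (α * k + β) = ((1/s) ^ α) ^ k * (1/s) ^ β := fun k => by
    rw [Real.rpow_add (by positivity), Real.rpow_mul (by positivity), Real.rpow_natCast]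
  have hval : ∀ k : ℕ, (∫ t in Set.Ioi (0:ℝ), F k t) = lam ^ k * ((1/s) ^ α) ^ k * (1/s) ^ β := by
    intro k
    rw [hF]
    simp only [MeasureTheory.integral_const_mul]
    rw [key_int s _ hs (hγ k), hpow k]
    field_simp [(Real.Gamma_pos_of_pos (hγ k)).ne']
  have hnorm : ∀ k : ℕ, (∫ t in Set.Ioi (0:ℝ), ‖F k t‖) =
      |lam| ^ k * ((1/s) ^ α) ^ k * (1/s) ^ β := by
    intro k
    have : ∀ t ∈ Set.Ioi (0:ℝ), ‖F k t‖ =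
        (|lam| ^ k / Real.Gamma (α * k + β)) * (t ^ (α * k + β - 1) * Real.exp (-(s * t))) := by
      intro t ht
      rw [hF]
      rw [norm_mul, Real.norm_eq_abs, Real.norm_eq_abs, abs_div, abs_pow,
        abs_of_pos (Real.Gamma_pos_of_pos (hγ k)),
        abs_of_pos (mul_pos (Real.rpow_pos_of_pos ht _) (Real.exp_pos _))]
    rw [MeasureTheory.setIntegral_congr_fun measurableSet_Ioi this,
      MeasureTheory.integral_const_mul, key_int s _ hs (hγ k), hpow k]
    field_simp [(Real.Gamma_pos_of_pos (hγ k)).ne']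
  have hratio : |lam| * (1/s) ^ α < 1 := by
    have h1 : (1/s) ^ α = (s ^ α)⁻¹ := by
      rw [one_div, Real.inv_rpow hs.le]
    rw [h1]
    rw [mul_inv_lt_iff₀ (Real.rpow_pos_of_pos hs α), one_mul]
    exact hlam
  have hratio0 : 0 ≤ |lam| * (1/s) ^ α := by positivity
  have hsum : Summable fun k : ℕ => ∫ t in Set.Ioi (0:ℝ), ‖F k t‖ := by
    refine Summable.congr (f := fun k : ℕ => (|lam| * (1/s) ^ α) ^ k * (1/s) ^ β) ?_ ?_
    · exact (summable_geometric_of_lt_one hratio0 hratio).mul_right _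
    · intro k
      rw [hnorm k]; ring
  have hpt : ∀ t ∈ Set.Ioi (0:ℝ),
      Real.exp (-s * t) * (t ^ (β - 1) * mittagLeffler α β (lam * t ^ α)) = ∑' k, F k t := by
    intro t ht
    have ht' : (0:ℝ) < t := ht
    have hterm : ∀ k : ℕ, F k t =
        Real.exp (-s * t) * (t ^ (β - 1) * ((lam * t ^ α) ^ k / Real.Gamma (α * k + β))) := by
      intro k
      simp only [hF]
      rw [mul_pow, ← Real.rpow_natCast (t ^ α) k, ← Real.rpow_mul ht'.le,
        show α * (k:ℝ) + β - 1 = α * (k:ℝ) + (β - 1) from by ring,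
        Real.rpow_add ht', neg_mul]
      ring
    rw [tsum_congr hterm, tsum_mul_left, tsum_mul_left, mittagLeffler]
  calc (∫ t in Set.Ioi (0:ℝ),
          Real.exp (-s * t) * (t ^ (β - 1) * mittagLeffler α β (lam * t ^ α)))
      = ∫ t in Set.Ioi (0:ℝ), ∑' k, F k t :=
        MeasureTheory.setIntegral_congr_fun measurableSet_Ioi hpt
    _ = ∑' k, ∫ t in Set.Ioi (0:ℝ), F k t :=
        (MeasureTheory.integral_tsum_of_summable_integral_norm hint hsum).symm
    _ = ∑' k : ℕ, (lam * (1/s) ^ α) ^ k * (1/s) ^ β := by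
        refine tsum_congr fun k => ?_
        rw [hval k, mul_pow]
    _ = (1 - lam * (1/s) ^ α)⁻¹ * (1/s) ^ β := by
        rw [tsum_mul_right, tsum_geometric_of_abs_lt_one]
        rw [abs_mul, abs_of_nonneg (by positivity : (0:ℝ) ≤ (1/s) ^ α)]
        exact hratio
    _ = s ^ (α - β) / (s ^ α - lam) := by
        have hA : (0:ℝ) < s ^ α := Real.rpow_pos_of_pos hs α
        have hB : (0:ℝ) < s ^ β := Real.rpow_pos_of_pos hs β
        have h1 : (1/s) ^ α = (s ^ α)⁻¹ := by rw [one_div, Real.inv_rpow hs.le]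
        have h2 : (1/s) ^ β = (s ^ β)⁻¹ := by rw [one_div, Real.inv_rpow hs.le]
        have h3 : s ^ (α - β) = s ^ α / s ^ β := Real.rpow_sub hs α β
        have h4 : s ^ α - lam ≠ 0 := by
          have : lam < s ^ α := lt_of_le_of_lt (le_abs_self lam) hlam
          linarith
        rw [h1, h2, h3]
        rw [show (1 - lam * (s ^ α)⁻¹) = (s ^ α - lam) * (s ^ α)⁻¹ from by
          field_simp, mul_inv, inv_inv, div_div]
        field_simp
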